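/- arXiv:1310.6928 — 2 statements merged into one kernel-verified Lean document; each statement's English description precedes it below -/
import Mathlib

section
/- Fix T > 0 and n ≥ 1. Let b, ū : [0,T]×ℝ^d → ℝ^d and σ : ℝ^d → ℝ^{d×d} be continuous (with b, σ depending only on x), a(x) = σ(x)σ(x)ᵀ, and h : ℝ^d → ℝ. Suppose v₀, v₁, …, v_n : [0,T]×ℝ^d → ℝ are of class C^{1,2} and satisfy, on [0,T)×ℝ^d: (order 0) ∂_t v₀ + ⟨b − σū, ∇_x v₀⟩ − (1/2)‖σᵀ∇_x v₀‖² − ‖ū‖² = 0 with v₀(T,x) = 2h(x); and for each 1 ≤ k ≤ n, ∂_t v_k + ⟨b − σū, ∇_x v_k⟩ + (1/2) a : ∇²_x v_{k−1} − Σ_{i+j=k, 0 ≤ i < j} ⟨σᵀ∇_x v_i, σᵀ∇_x v_j⟩ − (1/2)‖σᵀ∇_x v_{k/2}‖² 𝟙{k even} = 0 with v_k(T,x) = 0. Then for every ε > 0 the function Ψ^ε_n := Σ_{i=0}^n ε^i v_i satisfies, at every (t,x) ∈ [0,T)×ℝ^d, ∂_t Ψ^ε_n + ⟨b − σū, ∇_x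 Ψ^ε_n⟩ + (ε/2) a : ∇²_x Ψ^ε_n − (1/2)‖σᵀ∇_x Ψ^ε_n‖² − ‖ū‖² = ε^{n+1} (1/2) a : ∇²_x v_n − (1/2) Σ_{0 ≤ i, j ≤ n, i+j ≥ n+1} ε^{i+j} ⟨σᵀ∇_x v_i, σᵀ∇_x v_j⟩; in particular the left-hand side is O(ε^{n+1}) as ε ↓ 0 on any set where the derivatives of v₀, …, v_n are bounded. -/
open Real Filter MeasureTheory Matrix intervalIntegral Set
open scoped BigOperators

noncomputable section

/-- Partial derivative of `f : ℝ^d → ℝ` in the `i`-th coordinate direction. -/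
noncomputable def pder {d : ℕ} (i : Fin d) (f : (Fin d → ℝ) → ℝ) (x : Fin d → ℝ) : ℝ :=
  fderiv ℝ f x (Pi.single i 1)

/-- Spatial gradient `∇_x f`. -/
noncomputable def gradv {d : ℕ} (f : (Fin d → ℝ) → ℝ) (x : Fin d → ℝ) : Fin d → ℝ :=
  fun i => pder i f x

/-- Spatial Hessian `∇²_x f`. -/
noncomputable def hessm {d : ℕ} (f : (Fin d → ℝ) → ℝ) (x : Fin d → ℝ) :
    Matrix (Fin d) (Fin d) ℝ :=
  Matrix.of fun i j => pder i (fun y => pder j f y) x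

/-- Euclidean inner product on `ℝ^d`. -/
def dotp {d : ℕ} (u v : Fin d → ℝ) : ℝ := ∑ i, u i * v i

/-- Matrix contraction `A : B = ∑_{i,j} A_{ij} B_{ij}`. -/
def mdot {d : ℕ} (A B : Matrix (Fin d) (Fin d) ℝ) : ℝ := ∑ i, ∑ j, A i j * B i j

/-- `f(t,x)` is of class `C^{1,2}` on `ℝ × ℝ^d`: continuous, continuously
differentiable in `t` and twice continuously differentiable in `x`. -/
def C12 {d : ℕ} (f : ℝ → (Fin d → ℝ) → ℝ) : Prop :=
  Continuous (fun p : ℝ × (Fin d → ℝ) => f p.1 p.2) ∧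
  (∀ x, Differentiable ℝ (fun s => f s x)) ∧
  Continuous (fun p : ℝ × (Fin d → ℝ) => deriv (fun s => f s p.2) p.1) ∧
  (∀ t, ContDiff ℝ 2 (f t)) ∧
  (∀ i, Continuous (fun p : ℝ × (Fin d → ℝ) => pder i (f p.1) p.2)) ∧
  (∀ i j, Continuous (fun p : ℝ × (Fin d → ℝ) => hessm (f p.1) p.2 i j))

/-- `f(t,x)` is of class `C^1` on `ℝ × ℝ^d`. -/
def C1 {d : ℕ} (f : ℝ → (Fin d → ℝ) → ℝ) : Prop :=
  Continuous (fun p : ℝ × (Fin d → ℝ) => f p.1 p.2) ∧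
  (∀ x, Differentiable ℝ (fun s => f s x)) ∧
  Continuous (fun p : ℝ × (Fin d → ℝ) => deriv (fun s => f s p.2) p.1) ∧
  (∀ t, Differentiable ℝ (f t)) ∧
  (∀ i, Continuous (fun p : ℝ × (Fin d → ℝ) => pder i (f p.1) p.2))

section Helpers
open Finset

lemma dotp_symm {d : ℕ} (u v : Fin d → ℝ) : dotp u v = dotp v u := by
  unfold dotp; exact Finset.sum_congr rfl fun i _ => mul_comm _ _

lemma half_sum (k : ℕ) (f : ℕ → ℕ → ℝ) (hsymm : ∀ i j, f i j = f j i) :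
    (∑ i ∈ range ((k+1)/2), f i (k-i)) + (if k % 2 = 0 then (1/2) * f (k/2) (k/2) else 0)
      = (1/2) * ∑ i ∈ range (k+1), f i (k-i) := by
  set c := (k+1)/2 with hc
  have hsplit : ∑ i ∈ range (k+1), f i (k-i)
      = (∑ i ∈ range c, f i (k-i)) + ∑ i ∈ range (k+1-c), f (c+i) (k-(c+i)) := by
    rw [show k+1 = c + (k+1-c) by omega, Finset.sum_range_add]
    congr 1
    · apply Finset.sum_congr _ (fun i hi => rfl)
      congr 1; omega
  have hrefl : ∑ i ∈ range (k+1-c), f (c+i) (k-(c+i))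
      = ∑ i ∈ range (k+1-c), f i (k-i) := by
    rw [← Finset.sum_range_reflect (fun i => f (c+i) (k-(c+i))) (k+1-c)]
    apply Finset.sum_congr rfl
    intro i hi
    simp only [Finset.mem_range] at hi
    rw [hsymm]
    congr 1 <;> omega
  rcases Nat.even_or_odd k with he | ho
  · have hk2 : k % 2 = 0 := Nat.even_iff.mp he
    have hN : k+1-c = c+1 := by omega
    have hcc : k - c = c := by omega
    rw [hsplit, hrefl, hN, Finset.sum_range_succ, hcc, if_pos hk2,
      show k/2 = c by omega]
    ring
  · have hk2 : ¬ k % 2 = 0 := by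
      have := Nat.odd_iff.mp ho; omega
    have hN : k+1-c = c := by omega
    rw [hsplit, hrefl, hN, if_neg hk2]
    ring

lemma tri_sum (n : ℕ) (F : ℕ → ℕ → ℝ) :
    ∑ i ∈ range (n+1), ∑ j ∈ range (n+1), (if i + j ≤ n then F i j else 0)
      = ∑ k ∈ range (n+1), ∑ i ∈ range (k+1), F i (k-i) := by
  have h1 : ∑ k ∈ range (n+1), ∑ i ∈ range (k+1), F i (k-i)
      = ∑ k ∈ range (n+1), ∑ p ∈ Finset.HasAntidiagonal.antidiagonal k, F p.1 p.2 := by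
    refine Finset.sum_congr rfl fun k _ => ?_
    rw [Finset.Nat.sum_antidiagonal_eq_sum_range_succ_mk]
  have hdisj : (↑(range (n+1)) : Set ℕ).PairwiseDisjoint (fun k => Finset.HasAntidiagonal.antidiagonal k) := by
    intro a _ b _ hab
    simp only [Function.onFun]
    apply Finset.disjoint_left.mpr
    intro p hp hp'
    simp only [Finset.HasAntidiagonal.mem_antidiagonal] at hp hp'
    omega
  rw [h1, ← Finset.sum_biUnion hdisj, ← Finset.sum_product']
  rw [show ∑ p ∈ range (n+1) ×ˢ range (n+1), (if p.1 + p.2 ≤ n then F p.1 p.2 else 0)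
      = ∑ p ∈ (range (n+1) ×ˢ range (n+1)).filter (fun p => p.1 + p.2 ≤ n), F p.1 p.2
    from (Finset.sum_filter _ _).symm]
  apply Finset.sum_congr _ (fun p _ => rfl)
  ext ⟨i, j⟩
  simp only [Finset.mem_biUnion, Finset.mem_range, Finset.HasAntidiagonal.mem_antidiagonal,
    Finset.mem_product, Finset.mem_filter]
  constructor
  · rintro ⟨⟨hi, hj⟩, hs⟩
    exact ⟨i + j, by omega, rfl⟩
  · rintro ⟨a, ha, rfl⟩
    omega

lemma master (n : ℕ) (ε : ℝ) (D L H : ℕ → ℝ) (Q : ℕ → ℕ → ℝ) (Uc : ℝ)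
    (h0 : D 0 + L 0 - (1/2) * Q 0 0 - Uc = 0)
    (hk : ∀ k, 1 ≤ k → k ≤ n →
      D k + L k + (1/2) * H (k-1) - (1/2) * ∑ i ∈ range (k+1), Q i (k-i) = 0) :
    (∑ k ∈ range (n+1), ε^k * D k) + (∑ k ∈ range (n+1), ε^k * L k)
      + (ε/2) * (∑ k ∈ range (n+1), ε^k * H k)
      - (1/2) * (∑ i ∈ range (n+1), ∑ j ∈ range (n+1), ε^(i+j) * Q i j)
      - Uc
    = ε^(n+1) * ((1/2) * H n)
      - (1/2) * ∑ i ∈ range (n+1), ∑ j ∈ range (n+1),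
          (if n + 1 ≤ i + j then ε^(i+j) * Q i j else 0) := by
  have hQsplit : ∑ i ∈ range (n+1), ∑ j ∈ range (n+1), ε^(i+j) * Q i j
      = (∑ i ∈ range (n+1), ∑ j ∈ range (n+1), (if i + j ≤ n then ε^(i+j) * Q i j else 0))
        + ∑ i ∈ range (n+1), ∑ j ∈ range (n+1), (if n + 1 ≤ i + j then ε^(i+j) * Q i j else 0) := by
    rw [← Finset.sum_add_distrib]
    refine Finset.sum_congr rfl fun i _ => ?_
    rw [← Finset.sum_add_distrib]
    refine Finset.sum_congr rfl fun j _ => ?_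
    split_ifs with h1 h2 h2 <;> first | omega | ring
  have hA : ∑ i ∈ range (n+1), ∑ j ∈ range (n+1), (if i + j ≤ n then ε^(i+j) * Q i j else 0)
      = ∑ k ∈ range (n+1), ε^k * ∑ i ∈ range (k+1), Q i (k-i) := by
    rw [tri_sum n (fun i j => ε^(i+j) * Q i j)]
    refine Finset.sum_congr rfl fun k hk' => ?_
    rw [Finset.mul_sum]
    refine Finset.sum_congr rfl fun i hi => ?_
    simp only [Finset.mem_range] at hi
    rw [show i + (k - i) = k by omega]
  rw [hQsplit, hA]
  rw [Finset.sum_range_succ (fun k => ε^k * H k) n]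
  rw [Finset.sum_range_succ' (fun k => ε^k * D k) n,
      Finset.sum_range_succ' (fun k => ε^k * L k) n,
      Finset.sum_range_succ' (fun k => ε^k * ∑ i ∈ range (k+1), Q i (k-i)) n]
  have key : ∑ k ∈ range n, (ε^(k+1) * D (k+1) + ε^(k+1) * L (k+1)
        + (ε/2) * (ε^k * H k) - (1/2) * (ε^(k+1) * ∑ i ∈ range (k+2), Q i (k+1-i))) = 0 := by
    apply Finset.sum_eq_zero
    intro k hk'
    simp only [Finset.mem_range] at hk'
    have h := hk (k+1) (by omega) (by omega)
    simp only [Nat.add_sub_cancel] at h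
    have hz : ε^(k+1) * (D (k+1) + L (k+1) + (1/2) * H k
        - (1/2) * ∑ i ∈ range (k+2), Q i (k+1-i)) = 0 := by rw [h]; ring
    calc ε^(k+1) * D (k+1) + ε^(k+1) * L (k+1)
        + (ε/2) * (ε^k * H k) - (1/2) * (ε^(k+1) * ∑ i ∈ range (k+2), Q i (k+1-i))
        = ε^(k+1) * (D (k+1) + L (k+1) + (1/2) * H k
            - (1/2) * ∑ i ∈ range (k+2), Q i (k+1-i)) := by ring
      _ = 0 := hz
  rw [Finset.sum_sub_distrib, Finset.sum_add_distrib, Finset.sum_add_distrib,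
      ← Finset.mul_sum, ← Finset.mul_sum] at key
  simp only [pow_zero, one_mul, zero_add, Finset.range_one, Finset.sum_singleton,
    Nat.sub_zero, Nat.sub_self] at *
  linear_combination key + h0

lemma pder_comb {d : ℕ} {s : Finset ℕ} (c : ℕ → ℝ) (f : ℕ → (Fin d → ℝ) → ℝ)
    (x : Fin d → ℝ) (hf : ∀ i ∈ s, DifferentiableAt ℝ (f i) x) (j : Fin d) :
    pder j (fun y => ∑ i ∈ s, c i * f i y) x = ∑ i ∈ s, c i * pder j (f i) x := by
  unfold pder
  have h1 : fderiv ℝ (fun y => ∑ i ∈ s, c i * f i y) x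
      = ∑ i ∈ s, c i • fderiv ℝ (f i) x := by
    rw [fderiv_fun_sum (fun i hi => (hf i hi).const_mul (c i))]
    exact Finset.sum_congr rfl fun i hi => fderiv_const_mul (hf i hi) (c i)
  rw [h1]
  simp [ContinuousLinearMap.sum_apply]

lemma pder_differentiable {d : ℕ} {f : (Fin d → ℝ) → ℝ} (hf : ContDiff ℝ 2 f) (j : Fin d) :
    Differentiable ℝ (fun y => pder j f y) := by
  have h1 : ContDiff ℝ 1 (fderiv ℝ f) := hf.fderiv_right (by norm_num)
  have h2 : Differentiable ℝ (fderiv ℝ f) := h1.differentiable (by norm_num)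
  exact (ContinuousLinearMap.apply ℝ ℝ (Pi.single j 1)).differentiable.comp h2

lemma hessm_comb {d : ℕ} {s : Finset ℕ} (c : ℕ → ℝ) (f : ℕ → (Fin d → ℝ) → ℝ)
    (x : Fin d → ℝ) (hf : ∀ i ∈ s, ContDiff ℝ 2 (f i)) (a b : Fin d) :
    hessm (fun y => ∑ i ∈ s, c i * f i y) x a b = ∑ i ∈ s, c i * hessm (f i) x a b := by
  unfold hessm
  simp only [Matrix.of_apply]
  have hfun : (fun y => pder b (fun z => ∑ i ∈ s, c i * f i z) y)
      = fun y => ∑ i ∈ s, c i * pder b (f i) y := by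
    funext y
    exact pder_comb c f y (fun i hi => ((hf i hi).differentiable (by norm_num)).differentiableAt) b
  rw [hfun]
  exact pder_comb c (fun i => pder b (f i)) x
    (fun i hi => (pder_differentiable (hf i hi) b).differentiableAt) a

lemma mulVec_comb {d : ℕ} {s : Finset ℕ} (M : Matrix (Fin d) (Fin d) ℝ) (c : ℕ → ℝ)
    (w : ℕ → Fin d → ℝ) :
    M *ᵥ (fun j => ∑ i ∈ s, c i * w i j) = fun r => ∑ i ∈ s, c i * (M *ᵥ w i) r := by
  funext r
  simp only [Matrix.mulVec, dotProduct, Finset.mul_sum]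
  rw [Finset.sum_comm]
  refine Finset.sum_congr rfl fun i _ => ?_
  exact Finset.sum_congr rfl fun j _ => by ring

lemma dotp_comb_right {d : ℕ} {s : Finset ℕ} (u : Fin d → ℝ) (c : ℕ → ℝ) (w : ℕ → Fin d → ℝ) :
    dotp u (fun r => ∑ i ∈ s, c i * w i r) = ∑ i ∈ s, c i * dotp u (w i) := by
  unfold dotp
  simp only [Finset.mul_sum]
  rw [Finset.sum_comm]
  refine Finset.sum_congr rfl fun i _ => ?_
  exact Finset.sum_congr rfl fun j _ => by ring

lemma dotp_comb_both {d : ℕ} {s : Finset ℕ} (c : ℕ → ℝ) (w : ℕ → Fin d → ℝ) :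
    dotp (fun r => ∑ i ∈ s, c i * w i r) (fun r => ∑ j ∈ s, c j * w j r)
      = ∑ i ∈ s, ∑ j ∈ s, c i * c j * dotp (w i) (w j) := by
  unfold dotp
  simp only [Finset.sum_mul, Finset.mul_sum]
  rw [Finset.sum_comm]
  refine Finset.sum_congr rfl fun i _ => ?_
  rw [Finset.sum_comm]
  refine Finset.sum_congr rfl fun j _ => ?_
  exact Finset.sum_congr rfl fun r _ => by ring

lemma mdot_comb_right {d : ℕ} {s : Finset ℕ} (A : Matrix (Fin d) (Fin d) ℝ) (c : ℕ → ℝ)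
    (B : ℕ → Matrix (Fin d) (Fin d) ℝ) :
    mdot A (Matrix.of fun a b => ∑ i ∈ s, c i * B i a b) = ∑ i ∈ s, c i * mdot A (B i) := by
  unfold mdot
  simp only [Matrix.of_apply]
  have h1 : ∀ a : Fin d, ∑ b, A a b * ∑ i ∈ s, c i * B i a b
      = ∑ i ∈ s, c i * ∑ b, A a b * B i a b := by
    intro a
    simp only [Finset.mul_sum]
    rw [Finset.sum_comm]
    refine Finset.sum_congr rfl fun i _ => ?_
    exact Finset.sum_congr rfl fun j _ => by ring
  simp only [h1]
  rw [Finset.sum_comm]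
  refine Finset.sum_congr rfl fun i _ => ?_
  rw [Finset.mul_sum]

end Helpers

/-- Full hierarchy of equations obtained by matching powers of `ε`:
if `v₀, …, v_n` solve the order-`0` Hamilton–Jacobi equation and the order-`k`
transport equations, then `Ψ^ε_n = ∑_{i=0}^n ε^i v_i` satisfies the log-transformed
second-moment PDE up to an explicit `O(ε^{n+1})` remainder. -/
theorem stmt_2 (d : ℕ) (T : ℝ) (hT : 0 < T) (n : ℕ) (hn : 1 ≤ n)
    (b : (Fin d → ℝ) → (Fin d → ℝ))
    (ubar : ℝ → (Fin d → ℝ) → (Fin d → ℝ))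
    (σ : (Fin d → ℝ) → Matrix (Fin d) (Fin d) ℝ)
    (h : (Fin d → ℝ) → ℝ)
    (hb : Continuous b)
    (hubar : Continuous (fun p : ℝ × (Fin d → ℝ) => ubar p.1 p.2))
    (hσ : Continuous σ)
    (v : ℕ → ℝ → (Fin d → ℝ) → ℝ)
    (hvreg : ∀ k ≤ n, C12 (v k))
    (hv₀pde : ∀ t x, 0 ≤ t → t < T →
      deriv (fun s => v 0 s x) t
        + dotp (b x - (σ x) *ᵥ (ubar t x)) (gradv (v 0 t) x)
        - (1 / 2) * dotp ((σ x)ᵀ *ᵥ gradv (v 0 t) x) ((σ x)ᵀ *ᵥ gradv (v 0 t) x)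
        - dotp (ubar t x) (ubar t x) = 0)
    (hv₀T : ∀ x, v 0 T x = 2 * h x)
    (hvkpde : ∀ k, 1 ≤ k → k ≤ n → ∀ t x, 0 ≤ t → t < T →
      deriv (fun s => v k s x) t
        + dotp (b x - (σ x) *ᵥ (ubar t x)) (gradv (v k t) x)
        + (1 / 2) * mdot (σ x * (σ x)ᵀ) (hessm (v (k - 1) t) x)
        - (∑ i ∈ Finset.range ((k + 1) / 2),
            dotp ((σ x)ᵀ *ᵥ gradv (v i t) x) ((σ x)ᵀ *ᵥ gradv (v (k - i) t) x))
        - (if k % 2 = 0 then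
            (1 / 2) * dotp ((σ x)ᵀ *ᵥ gradv (v (k / 2) t) x)
              ((σ x)ᵀ *ᵥ gradv (v (k / 2) t) x)
          else 0) = 0)
    (hvkT : ∀ k, 1 ≤ k → k ≤ n → ∀ x, v k T x = 0) :
    ∀ ε : ℝ, 0 < ε → ∀ t x, 0 ≤ t → t < T →
      deriv (fun s => ∑ i ∈ Finset.range (n + 1), ε ^ i * v i s x) t
        + dotp (b x - (σ x) *ᵥ (ubar t x))
            (gradv (fun y => ∑ i ∈ Finset.range (n + 1), ε ^ i * v i t y) x)
        + (ε / 2) * mdot (σ x * (σ x)ᵀ)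
            (hessm (fun y => ∑ i ∈ Finset.range (n + 1), ε ^ i * v i t y) x)
        - (1 / 2) * dotp
            ((σ x)ᵀ *ᵥ gradv (fun y => ∑ i ∈ Finset.range (n + 1), ε ^ i * v i t y) x)
            ((σ x)ᵀ *ᵥ gradv (fun y => ∑ i ∈ Finset.range (n + 1), ε ^ i * v i t y) x)
        - dotp (ubar t x) (ubar t x)
      = ε ^ (n + 1) * ((1 / 2) * mdot (σ x * (σ x)ᵀ) (hessm (v n t) x))
        - (1 / 2) * ∑ i ∈ Finset.range (n + 1), ∑ j ∈ Finset.range (n + 1),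
            (if n + 1 ≤ i + j then
              ε ^ (i + j) * dotp ((σ x)ᵀ *ᵥ gradv (v i t) x) ((σ x)ᵀ *ᵥ gradv (v j t) x)
            else 0) := by
  intro ε hε t x ht htT
  -- abbreviations
  have hQ : ∀ i j : ℕ, True := fun _ _ => trivial
  let Q : ℕ → ℕ → ℝ := fun i j =>
    dotp ((σ x)ᵀ *ᵥ gradv (v i t) x) ((σ x)ᵀ *ᵥ gradv (v j t) x)
  have hQsymm : ∀ i j, Q i j = Q j i := fun i j => dotp_symm _ _
  -- regularity facts
  have hC2 : ∀ i ∈ Finset.range (n+1), ContDiff ℝ 2 (v i t) := by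
    intro i hi
    exact (hvreg i (by simpa [Nat.lt_succ_iff] using hi)).2.2.2.1 t
  have hdiff : ∀ i ∈ Finset.range (n+1), DifferentiableAt ℝ (v i t) x :=
    fun i hi => ((hC2 i hi).differentiable (by norm_num)).differentiableAt
  -- 1) time derivative
  have hD : deriv (fun s => ∑ i ∈ Finset.range (n+1), ε ^ i * v i s x) t
      = ∑ i ∈ Finset.range (n+1), ε ^ i * deriv (fun s => v i s x) t := by
    rw [deriv_fun_sum (fun i hi => (((hvreg i
        (by simpa [Nat.lt_succ_iff] using hi)).2.1 x) t).const_mul (ε ^ i))]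
    exact Finset.sum_congr rfl fun i hi => deriv_const_mul (ε ^ i)
      (((hvreg i (by simpa [Nat.lt_succ_iff] using hi)).2.1 x) t)
  -- 2) gradient
  have hgrad : gradv (fun y => ∑ i ∈ Finset.range (n+1), ε ^ i * v i t y) x
      = fun j => ∑ i ∈ Finset.range (n+1), ε ^ i * gradv (v i t) x j := by
    funext j
    exact pder_comb (fun i => ε ^ i) (fun i => v i t) x hdiff j
  -- 3) hessian
  have hhess : hessm (fun y => ∑ i ∈ Finset.range (n+1), ε ^ i * v i t y) x
      = Matrix.of fun a c => ∑ i ∈ Finset.range (n+1), ε ^ i * hessm (v i t) x a c := by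
    ext a c
    exact hessm_comb (fun i => ε ^ i) (fun i => v i t) x hC2 a c
  rw [hD, hgrad, hhess, mdot_comb_right, dotp_comb_right, mulVec_comb, dotp_comb_both]
  have hdouble : ∑ i ∈ Finset.range (n+1), ∑ j ∈ Finset.range (n+1), ε ^ i * ε ^ j * Q i j
      = ∑ i ∈ Finset.range (n+1), ∑ j ∈ Finset.range (n+1), ε ^ (i + j) * Q i j := by
    refine Finset.sum_congr rfl fun i _ => Finset.sum_congr rfl fun j _ => by
      rw [pow_add]
  rw [hdouble]
  -- hypotheses for master
  have h0 : deriv (fun s => v 0 s x) t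
      + dotp (b x - (σ x) *ᵥ (ubar t x)) (gradv (v 0 t) x)
      - (1/2) * Q 0 0 - dotp (ubar t x) (ubar t x) = 0 := hv₀pde t x ht htT
  have hk : ∀ k, 1 ≤ k → k ≤ n →
      deriv (fun s => v k s x) t
      + dotp (b x - (σ x) *ᵥ (ubar t x)) (gradv (v k t) x)
      + (1/2) * mdot (σ x * (σ x)ᵀ) (hessm (v (k-1) t) x)
      - (1/2) * ∑ i ∈ Finset.range (k+1), Q i (k-i) = 0 := by
    intro k hk1 hk2
    have hpde := hvkpde k hk1 hk2 t x ht htT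
    have hhs := half_sum k Q hQsymm
    simp only [Q] at hhs ⊢
    linarith [hpde, hhs]
  exact master n ε (fun k => deriv (fun s => v k s x) t)
    (fun k => dotp (b x - (σ x) *ᵥ (ubar t x)) (gradv (v k t) x))
    (fun k => mdot (σ x * (σ x)ᵀ) (hessm (v k t) x)) Q
    (dotp (ubar t x) (ubar t x)) h0 hk
end
end

section
/- Fix T > 0 and (t,x) ∈ [0,T]×ℝ^d. Let b : ℝ^d → ℝ^d and σ : ℝ^d → ℝ^{d×d} be continuous with a(y) = σ(y)σ(y)ᵀ symmetric positive definite for every y, and let h : ℝ^d → ℝ. Let Ū : [0,T]×ℝ^d → ℝ be a classical subsolution: Ū is continuously differentiable, Ū_t + ⟨b(y), ∇_x Ū⟩ − (1/2)‖σ(y)ᵀ∇_x Ū‖² ≥ 0 on [0,T]×ℝ^d, and Ū(T,·) ≤ h. Define the importance sampling control ū(s,y) := −σ(y)ᵀ∇_x Ū(s,y) and set v₀(t,x) := inf over absolutely continuous φ : [t,T] → ℝ^d with φ(t) = x of ∫_t^T [ (1/2)‖φ̇(s) − (b(φ(s)) − σ(φ(s))ū(s,φ(s)))‖²_{a^{-1}(φ(s))}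 − ‖ū(s,φ(s))‖² ] ds + 2h(φ(T)), and G(t,x) := inf over the same class of paths of S_{tT}(φ) + h(φ(T)), where S_{tT}(φ) = ∫_t^T (1/2)‖φ̇(s) − b(φ(s))‖²_{a^{-1}(φ(s))} ds. Then v₀(t,x) ≥ G(t,x) + Ū(t,x). -/
open Real Filter MeasureTheory Matrix intervalIntegral Set
open scoped BigOperators

noncomputable section

open Metric Topology Asymptotics

section Aux

variable {d : ℕ}

lemma dotp_sub_left (u v w : Fin d → ℝ) : dotp (u - v) w = dotp u w - dotp v w := by
  simp [dotp, sub_mul, Finset.sum_sub_distrib]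

lemma dotp_smul_left (c : ℝ) (u w : Fin d → ℝ) : dotp (c • u) w = c * dotp u w := by
  simp [dotp, Finset.mul_sum, mul_assoc]

lemma abs_dotp_le (u w : Fin d → ℝ) : |dotp u w| ≤ (∑ i, |w i|) * ‖u‖ := by
  calc |dotp u w| ≤ ∑ i, |u i * w i| := Finset.abs_sum_le_sum_abs _ _
    _ ≤ ∑ i, |w i| * ‖u‖ := by
        refine Finset.sum_le_sum fun i _ => ?_
        rw [abs_mul, mul_comm]
        exact mul_le_mul_of_nonneg_left (by simpa using norm_le_pi_norm u i) (abs_nonneg _)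
    _ = (∑ i, |w i|) * ‖u‖ := by rw [Finset.sum_mul]

lemma fderiv_apply_dotp (f : (Fin d → ℝ) → ℝ) (z : Fin d → ℝ) (v : Fin d → ℝ) :
    fderiv ℝ f z v = dotp v (gradv f z) := by
  have hv : v = ∑ i, (v i) • (Pi.single i (1:ℝ) : Fin d → ℝ) := by
    funext j
    simp [Finset.sum_apply, Pi.single_apply]
  conv_lhs => rw [hv]
  rw [map_sum]
  simp only [ContinuousLinearMap.map_smul]
  simp [dotp, gradv, pder, smul_eq_mul]

/-- Lebesgue differentiation: a.e. differentiability of primitives of integrable functions. -/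
lemma ae_hasDerivAt_primitive {E : Type*} [NormedAddCommGroup E] [NormedSpace ℝ E]
    [CompleteSpace E] (c : ℝ) {f : ℝ → E} (hf : Integrable f volume) :
    ∀ᵐ s : ℝ, HasDerivAt (fun u => ∫ r in c..u, f r) (f s) s := by
  filter_upwards [IsUnifLocDoublingMeasure.ae_tendsto_average_norm_sub (μ := volume)
    hf.locallyIntegrable 1] with s hs
  have hδ : Tendsto (fun u : ℝ => |u - s|) (𝓝[≠] s) (𝓝[>] 0) := by
    apply tendsto_nhdsWithin_of_tendsto_nhds_of_eventually_within
    · have : Tendsto (fun u : ℝ => |u - s|) (𝓝 s) (𝓝 |s - s|) :=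
        ((continuous_id.sub continuous_const).abs).tendsto s
      simpa using this.mono_left nhdsWithin_le_nhds
    · filter_upwards [self_mem_nhdsWithin] with u hu
      exact abs_pos.2 (sub_ne_zero.2 hu)
  have havg : Tendsto (fun u : ℝ => ⨍ y in closedBall s |u - s|, ‖f y - f s‖)
      (𝓝[≠] s) (𝓝 0) := by
    refine hs (fun _ => s) (fun u => |u - s|) hδ ?_
    filter_upwards with u
    simpa using mem_closedBall_self (by positivity)
  rw [hasDerivAt_iff_tendsto_slope]
  rw [tendsto_iff_norm_sub_tendsto_zero]
  refine squeeze_zero' (.of_forall fun u => norm_nonneg _)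
    ?_ (by simpa using havg.const_mul 2)
  filter_upwards [self_mem_nhdsWithin] with u (hu : u ≠ s)
  have hus : |u - s| > 0 := abs_pos.2 (sub_ne_zero.2 hu)
  have key : (∫ r in c..u, f r) - (∫ r in c..s, f r) = ∫ r in s..u, f r :=
    integral_interval_sub_left hf.intervalIntegrable hf.intervalIntegrable
  have key2 : (∫ r in s..u, f r) - (u - s) • f s = ∫ r in s..u, (f r - f s) := by
    rw [intervalIntegral.integral_sub hf.intervalIntegrable intervalIntegrable_const,
      intervalIntegral.integral_const]
  have hnorm : ‖∫ r in s..u, (f r - f s)‖ ≤ ∫ r in Set.uIoc s u, ‖f r - f s‖ :=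
    intervalIntegral.norm_integral_le_integral_norm_uIoc
  have hsub : Set.uIoc s u ⊆ closedBall s |u - s| := by
    intro r hr
    rcases le_or_gt s u with h | h
    · rw [uIoc_of_le h] at hr
      rw [mem_closedBall, Real.dist_eq]
      rw [abs_of_nonneg (le_of_lt (sub_pos.2 hr.1)), abs_of_nonneg (sub_nonneg.2 h)]
      linarith [hr.2]
    · rw [uIoc_of_ge h.le] at hr
      rw [mem_closedBall, Real.dist_eq]
      rw [abs_of_nonpos (by linarith [hr.2] : r - s ≤ 0), abs_of_nonpos (by linarith : u - s ≤ 0)]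
      linarith [hr.1]
  have hball : volume (closedBall s |u - s|) < ⊤ := by
    rw [Real.volume_closedBall]; exact ENNReal.ofReal_lt_top
  have hint : IntegrableOn (fun r => ‖f r - f s‖) (closedBall s |u - s|) volume :=
    (hf.integrableOn.sub (integrableOn_const hball.ne)).norm
  have hmono : ∫ r in Set.uIoc s u, ‖f r - f s‖ ≤ ∫ r in closedBall s |u - s|, ‖f r - f s‖ :=
    setIntegral_mono_set hint (.of_forall fun r => norm_nonneg _)
      (HasSubset.Subset.eventuallyLE hsub)
  have havg_eq : ∫ r in closedBall s |u - s|, ‖f r - f s‖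
      = (2 * |u - s|) * ⨍ y in closedBall s |u - s|, ‖f y - f s‖ := by
    rw [setAverage_eq, Real.volume_real_closedBall (by positivity),
      smul_eq_mul, ← mul_assoc, mul_inv_cancel₀ (by positivity), one_mul]
  calc ‖slope (fun u => ∫ r in c..u, f r) s u - f s‖
      = ‖(u - s)⁻¹ • ((∫ r in s..u, f r) - (u - s) • f s)‖ := by
        rw [slope_def_module, key, smul_sub]
        congr 2
        rw [smul_smul, inv_mul_cancel₀ (sub_ne_zero.2 hu), one_smul]
    _ = |u - s|⁻¹ * ‖(∫ r in s..u, f r) - (u - s) • f s‖ := by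
        rw [norm_smul, norm_inv, Real.norm_eq_abs]
    _ ≤ |u - s|⁻¹ * ((2 * |u - s|) * ⨍ y in closedBall s |u - s|, ‖f y - f s‖) := by
        apply mul_le_mul_of_nonneg_left _ (by positivity)
        rw [key2, ← havg_eq]
        exact hnorm.trans hmono
    _ = 2 * ⨍ y in closedBall s |u - s|, ‖f y - f s‖ := by
        field_simp

/-- FTC-type inequality for a continuous function `g` which is Lipschitz with respect to a
continuous modulus `V` and has a.e. derivative `F` on `(a,b)`. -/
lemma ftc_ineq {a b : ℝ} (hab : a < b) {g V F R : ℝ → ℝ}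
    (hg : Continuous g) (hV : Continuous V)
    (hLip : ∀ ⦃s u : ℝ⦄, s ≤ u → |g u - g s| ≤ V u - V s)
    (hae : ∀ᵐ s : ℝ, s ∈ Ioo a b → HasDerivAt g (F s) s ∧ HasDerivAt V (R s) s)
    (hFR : ∀ s ∈ Ioo a b, -R s ≤ F s)
    (hFint : IntervalIntegrable F MeasureTheory.volume a b)
    (hRint : IntervalIntegrable R MeasureTheory.volume a b)
    (hVR : ∫ s in a..b, R s = V b - V a) :
    ∫ s in a..b, F s ≤ g b - g a := by
  set G : ℝ → ℝ := fun s => g s + V s with hGdef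
  have hGc : Continuous G := hg.add hV
  set h : ℕ → ℝ := fun n => (b - a) / (n + 1) with hhdef
  have hpos : ∀ n, 0 < h n := fun n => div_pos (by linarith) (by positivity)
  have hh0 : Tendsto h atTop (𝓝[>] 0) := by
    apply tendsto_nhdsWithin_of_tendsto_nhds_of_eventually_within
    · have := tendsto_one_div_add_atTop_nhds_zero_nat.const_mul (b - a)
      simpa [hhdef, div_eq_mul_inv, one_div] using this
    · exact .of_forall fun n => hpos n
  set q : ℕ → ℝ → ℝ := fun n s => (G (s + h n) - G s) / h n with hqdef
  have hGmono : ∀ ⦃s u : ℝ⦄, s ≤ u → G s ≤ G u := by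
    intro s u hsu
    have h1 := abs_le.1 (hLip hsu)
    simp only [hGdef]
    linarith [h1.1]
  have hq0 : ∀ n s, 0 ≤ q n s := fun n s =>
    div_nonneg (sub_nonneg.2 (hGmono (by linarith [hpos n]))) (hpos n).le
  have hqcont : ∀ n, Continuous (q n) := fun n =>
    ((hGc.comp (continuous_id.add continuous_const)).sub hGc).div_const _
  have hInt_eq : ∀ n, ∫ s in a..b, q n s =
      ((∫ s in b..(b + h n), G s) - ∫ s in a..(a + h n), G s) / h n := by
    intro n
    have hGi : ∀ x y : ℝ, IntervalIntegrable G MeasureTheory.volume x y := fun x y =>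
      hGc.intervalIntegrable x y
    have e1 : ∫ s in a..b, G (s + h n) = ∫ s in (a + h n)..(b + h n), G s :=
      intervalIntegral.integral_comp_add_right G (h n)
    have e2 : (∫ s in (a + h n)..(b + h n), G s) - ∫ s in a..b, G s
        = (∫ s in b..(b + h n), G s) - ∫ s in a..(a + h n), G s := by
      have A : (∫ s in (a + h n)..a, G s) + (∫ s in a..b, G s) = ∫ s in (a + h n)..b, G s :=
        intervalIntegral.integral_add_adjacent_intervals (hGi _ _) (hGi _ _)
      have B : (∫ s in (a + h n)..b, G s) + (∫ s in b..(b + h n), G s)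
          = ∫ s in (a + h n)..(b + h n), G s :=
        intervalIntegral.integral_add_adjacent_intervals (hGi _ _) (hGi _ _)
      have C : (∫ s in (a + h n)..a, G s) = -∫ s in a..(a + h n), G s :=
        intervalIntegral.integral_symm a (a + h n)
      linarith
    calc ∫ s in a..b, q n s = ∫ s in a..b, (G (s + h n) - G s) / h n := rfl
      _ = (∫ s in a..b, (G (s + h n) - G s)) / h n := by
          rw [intervalIntegral.integral_div]
      _ = ((∫ s in a..b, G (s + h n)) - ∫ s in a..b, G s) / h n := by
          have hGt : Continuous fun s : ℝ => G (s + h n) := by fun_prop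
          rw [intervalIntegral.integral_sub (hGt.intervalIntegrable a b) (hGi a b)]
      _ = ((∫ s in b..(b + h n), G s) - ∫ s in a..(a + h n), G s) / h n := by
          rw [e1, e2]
  have hprim : ∀ c : ℝ, Tendsto (fun η : ℝ => (∫ s in c..(c + η), G s) / η) (𝓝[>] 0)
      (𝓝 (G c)) := by
    intro c
    have hd : HasDerivAt (fun u => ∫ s in c..u, G s) (G c) c :=
      intervalIntegral.integral_hasDerivAt_right (hGc.intervalIntegrable c c)
        (hGc.stronglyMeasurableAtFilter _ _) hGc.continuousAt
    have hslope := hasDerivAt_iff_tendsto_slope.1 hd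
    have hmap : Tendsto (fun η : ℝ => c + η) (𝓝[>] 0) (𝓝[≠] c) := by
      apply tendsto_nhdsWithin_of_tendsto_nhds_of_eventually_within
      · simpa using (tendsto_const_nhds.add (tendsto_id.mono_left nhdsWithin_le_nhds) :
          Tendsto (fun η : ℝ => c + η) (𝓝[>] 0) (𝓝 (c + 0)))
      · filter_upwards [self_mem_nhdsWithin] with η (hη : 0 < η)
        simp only [mem_compl_singleton_iff]
        intro hc
        linarith
    have := hslope.comp hmap
    simp only [Function.comp_def, slope_def_field] at this
    simpa [intervalIntegral.integral_same] using this
  have hItend : Tendsto (fun n => ∫ s in a..b, q n s) atTop (𝓝 (G b - G a)) := by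
    simp only [hInt_eq]
    have h1 := (hprim b).comp hh0
    have h2 := (hprim a).comp hh0
    simpa [Function.comp_def, sub_div] using h1.sub h2
  have haeconv : ∀ᵐ s : ℝ, s ∈ Ioo a b → Tendsto (fun n => q n s) atTop (𝓝 (F s + R s)) := by
    filter_upwards [hae] with s hs hmem
    obtain ⟨hgF, hVR'⟩ := hs hmem
    have hG : HasDerivAt G (F s + R s) s := hgF.add hVR'
    have hslope := hasDerivAt_iff_tendsto_slope.1 hG
    have hmap : Tendsto (fun n => s + h n) atTop (𝓝[≠] s) := by
      apply tendsto_nhdsWithin_of_tendsto_nhds_of_eventually_within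
      · simpa using (tendsto_const_nhds.add (hh0.mono_right nhdsWithin_le_nhds) :
          Tendsto (fun n => s + h n) atTop (𝓝 (s + 0)))
      · filter_upwards with n
        simp only [mem_compl_singleton_iff]
        intro hc
        linarith [hpos n]
    have := hslope.comp hmap
    simp only [Function.comp_def, slope_def_field] at this
    simpa [hqdef] using this
  set μ : Measure ℝ := MeasureTheory.volume.restrict (Ioo a b) with hμdef
  have hfatou := MeasureTheory.lintegral_liminf_le
    (u := atTop) (μ := μ) (f := fun n s => ENNReal.ofReal (q n s))
    (fun n => (hqcont n).measurable.ennreal_ofReal)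
  have haeconv' : ∀ᵐ s ∂μ, Filter.liminf (fun n => ENNReal.ofReal (q n s)) atTop
      = ENNReal.ofReal (F s + R s) := by
    rw [hμdef, ae_restrict_iff' measurableSet_Ioo]
    filter_upwards [haeconv] with s hs hmem
    exact ((ENNReal.continuous_ofReal.tendsto _).comp (hs hmem)).liminf_eq
  have hFRnn : ∀ᵐ s ∂μ, 0 ≤ F s + R s := by
    rw [hμdef, ae_restrict_iff' measurableSet_Ioo]
    filter_upwards with s hmem
    linarith [hFR s hmem]
  have hFRi : Integrable (fun s => F s + R s) μ := by
    rw [hμdef]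
    exact ((hFint.1.mono_set Ioo_subset_Ioc_self).add
      (hRint.1.mono_set Ioo_subset_Ioc_self))
  have hLHS : ∫⁻ s, Filter.liminf (fun n => ENNReal.ofReal (q n s)) atTop ∂μ
      = ENNReal.ofReal (∫ s, (F s + R s) ∂μ) := by
    rw [lintegral_congr_ae haeconv']
    rw [MeasureTheory.ofReal_integral_eq_lintegral_ofReal hFRi hFRnn]
  have hqn_int : ∀ n, Integrable (q n) μ := by
    intro n
    rw [hμdef]
    exact ((hqcont n).integrableOn_Icc.mono_set Ioo_subset_Icc_self)
  have hRHS : ∀ n, ∫⁻ s, ENNReal.ofReal (q n s) ∂μ = ENNReal.ofReal (∫ s, q n s ∂μ) := by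
    intro n
    rw [MeasureTheory.ofReal_integral_eq_lintegral_ofReal (hqn_int n)
      (.of_forall fun s => hq0 n s)]
  have hμint : ∀ n, ∫ s, q n s ∂μ = ∫ s in a..b, q n s := by
    intro n
    rw [hμdef, intervalIntegral.integral_of_le hab.le,
      MeasureTheory.integral_Ioc_eq_integral_Ioo]
  have hliminfRHS : Filter.liminf (fun n => ∫⁻ s, ENNReal.ofReal (q n s) ∂μ) atTop
      = ENNReal.ofReal (G b - G a) := by
    simp only [hRHS, hμint]
    exact ((ENNReal.continuous_ofReal.tendsto _).comp hItend).liminf_eq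
  rw [hLHS, hliminfRHS] at hfatou
  have hS : 0 ≤ G b - G a := sub_nonneg.2 (hGmono hab.le)
  have hineq : ∫ s, (F s + R s) ∂μ ≤ G b - G a :=
    (ENNReal.ofReal_le_ofReal_iff hS).1 hfatou
  have hμFR : ∫ s, (F s + R s) ∂μ = (∫ s in a..b, F s) + ∫ s in a..b, R s := by
    rw [hμdef, MeasureTheory.integral_add (hFint.1.mono_set Ioo_subset_Ioc_self)
      (hRint.1.mono_set Ioo_subset_Ioc_self)]
    rw [intervalIntegral.integral_of_le hab.le, intervalIntegral.integral_of_le hab.le,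
      MeasureTheory.integral_Ioc_eq_integral_Ioo, MeasureTheory.integral_Ioc_eq_integral_Ioo]
  rw [hμFR, hVR] at hineq
  simp only [hGdef] at hineq
  linarith

/-- Chain rule: `u ↦ Ū(u, ψ(u))` is differentiable where `ψ` is, for `Ū` of class `C¹`. -/
lemma hasDerivAt_comp_C1 {Ubar : ℝ → (Fin d → ℝ) → ℝ} (hU : C1 Ubar)
    {ψ : ℝ → Fin d → ℝ} {w : Fin d → ℝ} {s : ℝ} (hψ : HasDerivAt ψ w s) :
    HasDerivAt (fun u => Ubar u (ψ u))
      (deriv (fun r => Ubar r (ψ s)) s + dotp w (gradv (Ubar s) (ψ s))) s := by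
  obtain ⟨hcont, hdt, hdtc, hdx, hpc⟩ := hU
  set y := ψ s with hy
  set A := deriv (fun r => Ubar r y) s with hA
  set p := gradv (Ubar s) y with hp
  set D : ℝ → (Fin d → ℝ) → ℝ := fun r z => deriv (fun r' => Ubar r' z) r with hD
  rw [hasDerivAt_iff_isLittleO]
  have key : (fun u => Ubar u (ψ u) - Ubar s y - (u - s) • (A + dotp w p))
      = (fun u => (Ubar u (ψ u) - Ubar s (ψ u) - (u - s) * A)
          + ((Ubar s (ψ u) - Ubar s y - dotp (ψ u - y) p)
            + dotp (ψ u - y - (u - s) • w) p)) := by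
    funext u
    simp only [dotp_sub_left, dotp_smul_left]
    simp only [smul_eq_mul]
    ring
  rw [key]
  have hψO : (fun u => ψ u - y) =O[𝓝 s] fun u => u - s := hψ.hasFDerivAt.isBigO_sub
  have E3 : (fun u => dotp (ψ u - y - (u - s) • w) p) =o[𝓝 s] fun u => u - s := by
    have h1 : (fun u => ψ u - y - (u - s) • w) =o[𝓝 s] fun u => u - s :=
      hasDerivAt_iff_isLittleO.1 hψ
    refine IsBigO.trans_isLittleO ?_ h1
    refine IsBigO.of_bound (∑ i, |p i|) ?_
    filter_upwards with u
    simpa [Real.norm_eq_abs] using abs_dotp_le (ψ u - y - (u - s) • w) p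
  have E2 : (fun u => Ubar s (ψ u) - Ubar s y - dotp (ψ u - y) p) =o[𝓝 s]
      fun u => u - s := by
    have hf : HasFDerivAt (Ubar s) (fderiv ℝ (Ubar s) y) y := ((hdx s) y).hasFDerivAt
    have h1 := hf.isLittleO.comp_tendsto hψ.continuousAt
    have h2 : (fun u => Ubar s (ψ u) - Ubar s y - dotp (ψ u - y) p)
        =o[𝓝 s] fun u => ψ u - y := by
      refine h1.congr' ?_ (by rfl)
      filter_upwards with u
      simp [Function.comp, fderiv_apply_dotp, hp]
    exact h2.trans_isBigO hψO
  have E1 : (fun u => Ubar u (ψ u) - Ubar s (ψ u) - (u - s) * A) =o[𝓝 s]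
      fun u => u - s := by
    rw [Asymptotics.isLittleO_iff]
    intro c hc
    have hDc : ContinuousAt (fun pr : ℝ × (Fin d → ℝ) => D pr.1 pr.2) (s, y) := by
      exact hdtc.continuousAt
    rcases Metric.continuousAt_iff.1 hDc c hc with ⟨δ, hδpos, hδ⟩
    have hev1 : ∀ᶠ u in 𝓝 s, |u - s| < δ := by
      have : ContinuousAt (fun u : ℝ => |u - s|) s := by fun_prop
      have h0 : |s - s| < δ := by simpa using hδpos
      exact this.eventually_lt (by fun_prop) (by simpa using h0)
    have hev2 : ∀ᶠ u in 𝓝 s, dist (ψ u) y < δ := by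
      have := hψ.continuousAt
      exact this.eventually (Metric.ball_mem_nhds y hδpos)
    filter_upwards [hev1, hev2] with u hu1 hu2
    rcases eq_or_ne u s with rfl | hus
    · simp
    have hmvt : ∃ ξ : ℝ, |ξ - s| < |u - s| ∧
        Ubar u (ψ u) - Ubar s (ψ u) = (u - s) * D ξ (ψ u) := by
      have hcontf : ∀ (z : Fin d → ℝ) (a' b' : ℝ), ContinuousOn (fun r => Ubar r z)
          (Icc a' b') := fun z a' b' => ((hdt z).continuous).continuousOn
      have hderf : ∀ (z : Fin d → ℝ) (r : ℝ), HasDerivAt (fun r' => Ubar r' z) (D r z) r :=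
        fun z r => ((hdt z) r).hasDerivAt
      rcases lt_or_gt_of_ne hus with h | h
      · obtain ⟨ξ, hξ, hval⟩ := exists_hasDerivAt_eq_slope (fun r => Ubar r (ψ u))
          (fun r => D r (ψ u)) h (hcontf _ _ _) (fun r _ => hderf _ r)
        refine ⟨ξ, ?_, ?_⟩
        · rw [abs_sub_comm ξ s, abs_of_pos (by linarith [hξ.2] : 0 < s - ξ)]
          rw [abs_sub_comm u s, abs_of_pos (by linarith : 0 < s - u)]
          linarith [hξ.1]
        · rw [hval]
          have hne : s - u ≠ 0 := by intro hh; apply hus; linarith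
          field_simp
          ring
      · obtain ⟨ξ, hξ, hval⟩ := exists_hasDerivAt_eq_slope (fun r => Ubar r (ψ u))
          (fun r => D r (ψ u)) h (hcontf _ _ _) (fun r _ => hderf _ r)
        refine ⟨ξ, ?_, ?_⟩
        · rw [abs_of_pos (by linarith [hξ.1] : 0 < ξ - s), abs_of_pos (by linarith : 0 < u - s)]
          linarith [hξ.2]
        · rw [hval]
          have hne : u - s ≠ 0 := by intro hh; apply hus; linarith
          field_simp
    obtain ⟨ξ, hξ1, hξ2⟩ := hmvt
    have hdist : dist (ξ, ψ u) (s, y) < δ := by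
      rw [Prod.dist_eq]
      apply max_lt
      · rw [Real.dist_eq]; exact lt_trans hξ1 hu1
      · exact hu2
    have hDD : |D ξ (ψ u) - D s y| < c := by
      have := hδ hdist
      simpa [Real.dist_eq] using this
    have heq : Ubar u (ψ u) - Ubar s (ψ u) - (u - s) * A = (u - s) * (D ξ (ψ u) - D s y) := by
      rw [hξ2]
      have : A = D s y := rfl
      rw [this]
      ring
    rw [heq]
    rw [Real.norm_eq_abs, Real.norm_eq_abs, abs_mul]
    rw [mul_comm]
    exact mul_le_mul_of_nonneg_right hDD.le (abs_nonneg _)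
  exact E1.add (E2.add E3)

/-- Mean value bound in space. -/
lemma abs_sub_le_grad {f : (Fin d → ℝ) → ℝ} (hf : Differentiable ℝ f)
    {y y' : Fin d → ℝ} {C : ℝ}
    (hC : ∀ θ ∈ Icc (0:ℝ) 1, (∑ i, |pder i f (y + θ • (y' - y))|) ≤ C) :
    |f y' - f y| ≤ C * ‖y' - y‖ := by
  set v := y' - y with hvdef
  rcases eq_or_ne y' y with rfl | hne
  · simp only [sub_self, abs_zero]
    have hC0 : 0 ≤ C :=
      le_trans (Finset.sum_nonneg fun i _ => abs_nonneg _) (hC 0 (by norm_num))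
    positivity
  have hpath : ∀ θ : ℝ, HasDerivAt (fun θ' : ℝ => y + θ' • v) v θ := by
    intro θ
    simpa using ((hasDerivAt_id θ).smul_const v).const_add y
  have hF : ∀ θ : ℝ, HasDerivAt (fun θ' => f (y + θ' • v))
      (fderiv ℝ f (y + θ • v) v) θ := by
    intro θ
    exact (hf (y + θ • v)).hasFDerivAt.comp_hasDerivAt θ (hpath θ)
  obtain ⟨ξ, hξ, hval⟩ := exists_hasDerivAt_eq_slope (fun θ' => f (y + θ' • v))
    (fun θ => fderiv ℝ f (y + θ • v) v) one_pos
    (fun θ _ => (hF θ).continuousAt.continuousWithinAt) (fun θ _ => hF θ)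
  have h1 : f y' - f y = fderiv ℝ f (y + ξ • v) v := by
    rw [hval]
    simp [hvdef]
  rw [h1, fderiv_apply_dotp]
  calc |dotp v (gradv f (y + ξ • v))| ≤ (∑ i, |gradv f (y + ξ • v) i|) * ‖v‖ := abs_dotp_le _ _
    _ ≤ C * ‖v‖ := by
        apply mul_le_mul_of_nonneg_right _ (norm_nonneg _)
        exact hC ξ (Ioo_subset_Icc_self hξ)

/-- The pointwise algebraic identity between the two integrands. -/
lemma integrand_identity (σm : Matrix (Fin d) (Fin d) ℝ) (hPD : (σm * σmᵀ).PosDef)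
    (v p : Fin d → ℝ) :
    (1 / 2) * dotp (v - (σm * σmᵀ) *ᵥ p) ((σm * σmᵀ)⁻¹ *ᵥ (v - (σm * σmᵀ) *ᵥ p))
      - dotp (σmᵀ *ᵥ p) (σmᵀ *ᵥ p)
    = (1 / 2) * dotp v ((σm * σmᵀ)⁻¹ *ᵥ v) - dotp v p
      - (1 / 2) * dotp (σmᵀ *ᵥ p) (σmᵀ *ᵥ p) := by
  set a := σm * σmᵀ with ha
  have hdet : IsUnit a.det := isUnit_iff_ne_zero.2 (ne_of_gt hPD.det_pos)
  have hsymm : aᵀ = a := by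
    rw [ha, Matrix.transpose_mul, Matrix.transpose_transpose]
  have hinv_symm : (a⁻¹)ᵀ = a⁻¹ := by
    rw [Matrix.transpose_nonsing_inv, hsymm]
  have hmove : ∀ x z : Fin d → ℝ, dotp x (a⁻¹ *ᵥ z) = dotp (a⁻¹ *ᵥ x) z := by
    intro x z
    show x ⬝ᵥ (a⁻¹ *ᵥ z) = (a⁻¹ *ᵥ x) ⬝ᵥ z
    rw [Matrix.dotProduct_mulVec, ← Matrix.mulVec_transpose, hinv_symm]
  have hcancel : a⁻¹ *ᵥ (a *ᵥ p) = p := by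
    rw [Matrix.mulVec_mulVec, Matrix.nonsing_inv_mul _ hdet, Matrix.one_mulVec]
  have huu : dotp (σmᵀ *ᵥ p) (σmᵀ *ᵥ p) = dotp p (a *ᵥ p) := by
    show (σmᵀ *ᵥ p) ⬝ᵥ (σmᵀ *ᵥ p) = p ⬝ᵥ (a *ᵥ p)
    rw [Matrix.dotProduct_mulVec, Matrix.vecMul_transpose, Matrix.mulVec_mulVec, ← ha,
      dotProduct_comm]
  have hexp : dotp (v - a *ᵥ p) (a⁻¹ *ᵥ (v - a *ᵥ p))
      = dotp v (a⁻¹ *ᵥ v) - 2 * dotp v p + dotp p (a *ᵥ p) := by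
    have e1 : a⁻¹ *ᵥ (v - a *ᵥ p) = a⁻¹ *ᵥ v - p := by
      rw [Matrix.mulVec_sub, hcancel]
    rw [e1]
    show (v - a *ᵥ p) ⬝ᵥ (a⁻¹ *ᵥ v - p) = v ⬝ᵥ (a⁻¹ *ᵥ v) - 2 * (v ⬝ᵥ p) + p ⬝ᵥ (a *ᵥ p)
    rw [sub_dotProduct, dotProduct_sub, dotProduct_sub]
    have e2 : (a *ᵥ p) ⬝ᵥ (a⁻¹ *ᵥ v) = p ⬝ᵥ v := by
      calc (a *ᵥ p) ⬝ᵥ (a⁻¹ *ᵥ v) = (a⁻¹ *ᵥ (a *ᵥ p)) ⬝ᵥ v := hmove (a *ᵥ p) v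
        _ = p ⬝ᵥ v := by rw [hcancel]
    have e3 : (a *ᵥ p) ⬝ᵥ p = p ⬝ᵥ (a *ᵥ p) := dotProduct_comm _ _
    have e4 : v ⬝ᵥ p = p ⬝ᵥ v := dotProduct_comm _ _
    rw [e2, e3, e4]
    ring
  rw [huu, hexp]
  ring

lemma intervalIntegrable_apply {φ' : ℝ → Fin d → ℝ} {a b : ℝ}
    (h : IntervalIntegrable φ' MeasureTheory.volume a b) (i : Fin d) :
    IntervalIntegrable (fun s => φ' s i) MeasureTheory.volume a b := by
  constructor
  · exact (ContinuousLinearMap.proj (R := ℝ) (φ := fun _ : Fin d => ℝ) i).integrable_comp h.1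
  · exact (ContinuousLinearMap.proj (R := ℝ) (φ := fun _ : Fin d => ℝ) i).integrable_comp h.2

lemma intervalIntegrable_sum_fun {ι : Type*} (s : Finset ι) {F : ι → ℝ → ℝ}
    {μ : Measure ℝ} {a b : ℝ} (h : ∀ i ∈ s, IntervalIntegrable (F i) μ a b) :
    IntervalIntegrable (fun x => ∑ i ∈ s, F i x) μ a b := by
  have h1 := IntervalIntegrable.sum s h
  have h2 : (fun x => ∑ i ∈ s, F i x) = ∑ i ∈ s, F i := by
    funext x
    simp
  rw [h2]
  exact h1

end Aux

set_option maxHeartbeats 2000000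

/-- For a subsolution-based importance sampling control
`ū = -σᵀ∇Ū`, the variational decay rate `v₀` of the second moment satisfies
`v₀(t,x) ≥ G(t,x) + Ū(t,x)` (infima taken in the extended reals). -/
theorem stmt_7 (d : ℕ) (T : ℝ) (hT : 0 < T) (t : ℝ) (x : Fin d → ℝ)
    (ht : 0 ≤ t) (htT : t ≤ T)
    (b : (Fin d → ℝ) → (Fin d → ℝ))
    (σ : (Fin d → ℝ) → Matrix (Fin d) (Fin d) ℝ)
    (h : (Fin d → ℝ) → ℝ)
    (hbC : Continuous b) (hσC : Continuous σ)
    (haPD : ∀ y, (σ y * (σ y)ᵀ).PosDef)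
    (Ubar : ℝ → (Fin d → ℝ) → ℝ)
    (hUreg : C1 Ubar)
    (hUsub : ∀ s y, 0 ≤ s → s ≤ T →
      deriv (fun r => Ubar r y) s
        + dotp (b y) (gradv (Ubar s) y)
        - (1 / 2) * dotp ((σ y)ᵀ *ᵥ gradv (Ubar s) y) ((σ y)ᵀ *ᵥ gradv (Ubar s) y) ≥ 0)
    (hUT : ∀ y, Ubar T y ≤ h y)
    (ubar : ℝ → (Fin d → ℝ) → (Fin d → ℝ))
    (hubar : ∀ s y, ubar s y = -((σ y)ᵀ *ᵥ gradv (Ubar s) y)) :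
    sInf {r : EReal | ∃ φ φ' : ℝ → (Fin d → ℝ),
        φ t = x ∧
        (∀ s ∈ Set.Icc t T, φ s = x + ∫ u in t..s, φ' u) ∧
        IntervalIntegrable φ' MeasureTheory.volume t T ∧
        IntervalIntegrable (fun s => dotp (φ' s) (φ' s)) MeasureTheory.volume t T ∧
        IntervalIntegrable (fun s =>
          (1 / 2) * dotp (φ' s - b (φ s))
            ((σ (φ s) * (σ (φ s))ᵀ)⁻¹ *ᵥ (φ' s - b (φ s)))) MeasureTheory.volume t T ∧
        r = (((∫ s in t..T,
            (1 / 2) * dotp (φ' s - b (φ s))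
              ((σ (φ s) * (σ (φ s))ᵀ)⁻¹ *ᵥ (φ' s - b (φ s))))
          + h (φ T) : ℝ) : EReal)}
      + (Ubar t x : EReal)
    ≤ sInf {r : EReal | ∃ φ φ' : ℝ → (Fin d → ℝ),
        φ t = x ∧
        (∀ s ∈ Set.Icc t T, φ s = x + ∫ u in t..s, φ' u) ∧
        IntervalIntegrable φ' MeasureTheory.volume t T ∧
        IntervalIntegrable (fun s => dotp (φ' s) (φ' s)) MeasureTheory.volume t T ∧
        IntervalIntegrable (fun s =>
          (1 / 2) * dotp (φ' s - (b (φ s) - (σ (φ s)) *ᵥ (ubar s (φ s))))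
            ((σ (φ s) * (σ (φ s))ᵀ)⁻¹
              *ᵥ (φ' s - (b (φ s) - (σ (φ s)) *ᵥ (ubar s (φ s)))))
          - dotp (ubar s (φ s)) (ubar s (φ s))) MeasureTheory.volume t T ∧
        r = (((∫ s in t..T,
            (1 / 2) * dotp (φ' s - (b (φ s) - (σ (φ s)) *ᵥ (ubar s (φ s))))
              ((σ (φ s) * (σ (φ s))ᵀ)⁻¹
                *ᵥ (φ' s - (b (φ s) - (σ (φ s)) *ᵥ (ubar s (φ s)))))
            - dotp (ubar s (φ s)) (ubar s (φ s)))
          + 2 * h (φ T) : ℝ) : EReal)} := by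
  refine le_sInf fun r hr => ?_
  obtain ⟨φ, φ', hφt, hφeq, hI1, hI2, hBint, hrEq⟩ := hr
  -- Abbreviations for the two integrands
  set Bint : ℝ → ℝ := fun s =>
      (1 / 2) * dotp (φ' s - (b (φ s) - (σ (φ s)) *ᵥ (ubar s (φ s))))
        ((σ (φ s) * (σ (φ s))ᵀ)⁻¹
          *ᵥ (φ' s - (b (φ s) - (σ (φ s)) *ᵥ (ubar s (φ s)))))
      - dotp (ubar s (φ s)) (ubar s (φ s)) with hBintdef
  set Aint : ℝ → ℝ := fun s =>
      (1 / 2) * dotp (φ' s - b (φ s))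
        ((σ (φ s) * (σ (φ s))ᵀ)⁻¹ *ᵥ (φ' s - b (φ s))) with hAintdef
  -- the algebraic identity relating the two integrands
  have hvec : ∀ s, φ' s - (b (φ s) - (σ (φ s)) *ᵥ (ubar s (φ s)))
      = (φ' s - b (φ s)) - (σ (φ s) * (σ (φ s))ᵀ) *ᵥ (gradv (Ubar s) (φ s)) := by
    intro s
    rw [hubar, Matrix.mulVec_neg, Matrix.mulVec_mulVec]
    abel
  have huu : ∀ s, dotp (ubar s (φ s)) (ubar s (φ s))
      = dotp ((σ (φ s))ᵀ *ᵥ gradv (Ubar s) (φ s)) ((σ (φ s))ᵀ *ᵥ gradv (Ubar s) (φ s)) := by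
    intro s
    rw [hubar]
    simp [dotp, neg_mul_neg]
  have hBA : ∀ s, Bint s = Aint s - dotp (φ' s - b (φ s)) (gradv (Ubar s) (φ s))
      - (1/2) * dotp ((σ (φ s))ᵀ *ᵥ gradv (Ubar s) (φ s))
          ((σ (φ s))ᵀ *ᵥ gradv (Ubar s) (φ s)) := by
    intro s
    rw [hBintdef, hAintdef]
    simp only [hvec, huu]
    exact integrand_identity (σ (φ s)) (haPD (φ s)) _ _
  -- dispose of the degenerate case t = T
  rcases eq_or_lt_of_le htT with rfl | htT'
  · have hAmem : (((∫ s in t..t, Aint s) + h (φ t) : ℝ) : EReal) ∈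
        {r : EReal | ∃ φ φ' : ℝ → (Fin d → ℝ),
          φ t = x ∧
          (∀ s ∈ Set.Icc t t, φ s = x + ∫ u in t..s, φ' u) ∧
          IntervalIntegrable φ' MeasureTheory.volume t t ∧
          IntervalIntegrable (fun s => dotp (φ' s) (φ' s)) MeasureTheory.volume t t ∧
          IntervalIntegrable (fun s =>
            (1 / 2) * dotp (φ' s - b (φ s))
              ((σ (φ s) * (σ (φ s))ᵀ)⁻¹ *ᵥ (φ' s - b (φ s)))) MeasureTheory.volume t t ∧
          r = (((∫ s in t..t,
              (1 / 2) * dotp (φ' s - b (φ s))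
                ((σ (φ s) * (σ (φ s))ᵀ)⁻¹ *ᵥ (φ' s - b (φ s))))
            + h (φ t) : ℝ) : EReal)} := by
      exact ⟨φ, φ', hφt, hφeq, hI1, hI2, IntervalIntegrable.refl, rfl⟩
    refine le_trans (add_le_add_left (sInf_le hAmem) _) ?_
    rw [hrEq, ← EReal.coe_add]
    rw [EReal.coe_le_coe_iff]
    rw [intervalIntegral.integral_same, intervalIntegral.integral_same, hφt]
    have := hUT x
    linarith
  -- MAIN CASE : t < T
  -- the globally defined path and its ingredients
  have hfIcc : IntegrableOn φ' (Icc t T) MeasureTheory.volume := by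
    rw [integrableOn_Icc_iff_integrableOn_Ioc]
    exact hI1.1
  set f : ℝ → Fin d → ℝ := (Icc t T).indicator φ' with hfdef
  have hf_int : Integrable f MeasureTheory.volume :=
    hfIcc.integrable_indicator measurableSet_Icc
  have hf_eq : ∀ s ∈ Icc t T, f s = φ' s := fun s hs => indicator_of_mem hs φ'
  set pj : ℝ → ℝ := fun s => max t (min s T) with hpjdef
  have hpjcont : Continuous pj := continuous_const.max (continuous_id.min continuous_const)
  have hpjmem : ∀ s, pj s ∈ Icc t T := fun s => ⟨le_max_left _ _, max_le htT (min_le_right _ _)⟩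
  have hpjid : ∀ s ∈ Icc t T, pj s = s := by
    intro s hs
    rw [hpjdef]
    simp only
    rw [min_eq_left hs.2, max_eq_right hs.1]
  have hpjmono : Monotone pj := fun a c hac => max_le_max le_rfl (min_le_min hac le_rfl)
  set prim : ℝ → Fin d → ℝ := fun u => ∫ r in t..u, f r with hprimdef
  have hprimc : Continuous prim :=
    intervalIntegral.continuous_primitive (fun a' b' => hf_int.intervalIntegrable) t
  set φt : ℝ → Fin d → ℝ := fun u => x + prim (pj u) with hφtdef
  have hφtc : Continuous φt := continuous_const.add (hprimc.comp hpjcont)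
  have hφteq : ∀ s ∈ Icc t T, φt s = φ s := by
    intro s hs
    rw [hφtdef]
    simp only
    rw [hφeq s hs, hpjid s hs, hprimdef]
    simp only
    congr 1
    apply intervalIntegral.integral_congr
    intro r hr
    rw [uIcc_of_le hs.1] at hr
    exact indicator_of_mem (Icc_subset_Icc le_rfl hs.2 hr) φ'
  have hφtt : φt t = x := by
    rw [hφtdef]
    simp only
    rw [hpjid t ⟨le_refl t, htT⟩, hprimdef]
    simp [intervalIntegral.integral_same]
  have hφtT : φt T = φ T := hφteq T ⟨htT, le_refl T⟩
  have hpjidem : ∀ u, φt u = φt (pj u) := by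
    intro u
    rw [hφtdef]
    simp only
    rw [hpjid (pj u) (hpjmem u)]
  -- compact sets and bounds
  obtain ⟨C0, hC0⟩ := (isCompact_Icc.image hφtc).exists_bound_of_continuousOn
    continuous_id.continuousOn
  set K : Set (Fin d → ℝ) := Metric.closedBall 0 C0 with hKdef
  have hKco : Convex ℝ K := convex_closedBall _ _
  have hφtK : ∀ u, φt u ∈ K := by
    intro u
    rw [hKdef, mem_closedBall_zero_iff, hpjidem u]
    exact hC0 _ (mem_image_of_mem _ (hpjmem u))
  have hM1ex := ((isCompact_Icc (a := t) (b := T)).prod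
    (isCompact_closedBall (0 : Fin d → ℝ) C0)).exists_bound_of_continuousOn
    (hUreg.2.2.1.continuousOn)
  obtain ⟨M1, hM1⟩ := hM1ex
  have hMiex : ∀ i : Fin d, ∃ Mi : ℝ, ∀ s ∈ Icc t T, ∀ z ∈ K,
      |pder i (Ubar s) z| ≤ Mi := by
    intro i
    obtain ⟨Mi, hMi⟩ := ((isCompact_Icc (a := t) (b := T)).prod
      (isCompact_closedBall (0 : Fin d → ℝ) C0)).exists_bound_of_continuousOn
      ((hUreg.2.2.2.2 i).continuousOn)
    refine ⟨Mi, fun s hs z hz => ?_⟩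
    simpa [Real.norm_eq_abs] using hMi (s, z) ⟨hs, hz⟩
  choose M hM using hMiex
  set L : ℝ := max M1 0 + (∑ i, max (M i) 0) + 1 with hLdef
  have hMsum0 : 0 ≤ ∑ i : Fin d, max (M i) 0 := Finset.sum_nonneg fun i _ => le_max_right _ _
  have hL0 : 0 ≤ L := by
    rw [hLdef]
    have := le_max_right M1 0
    linarith
  have hL1 : ∀ s ∈ Icc t T, ∀ z ∈ K, |deriv (fun r => Ubar r z) s| ≤ L := by
    intro s hs z hz
    have h1 : ‖deriv (fun r => Ubar r z) s‖ ≤ M1 := hM1 (s, z) ⟨hs, hz⟩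
    rw [Real.norm_eq_abs] at h1
    rw [hLdef]
    have := le_max_left M1 0
    linarith
  have hL2 : ∀ s ∈ Icc t T, ∀ z ∈ K, (∑ i, |pder i (Ubar s) z|) ≤ L := by
    intro s hs z hz
    have h1 : (∑ i, |pder i (Ubar s) z|) ≤ ∑ i, max (M i) 0 :=
      Finset.sum_le_sum fun i _ => le_max_of_le_left (hM i s hs z hz)
    rw [hLdef]
    have := le_max_right M1 0
    linarith
  -- the modulus of absolute continuity
  set ρ : ℝ → ℝ := (Icc t T).indicator (fun r => L * (1 + ‖f r‖)) with hρdef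
  have hρ_nonneg : ∀ r, 0 ≤ ρ r := by
    intro r
    rw [hρdef]
    apply indicator_nonneg
    intro r' _
    positivity
  have hIccfin : MeasureTheory.volume (Icc t T) < ⊤ := isCompact_Icc.measure_lt_top
  have hρ_int : Integrable ρ MeasureTheory.volume := by
    apply IntegrableOn.integrable_indicator _ measurableSet_Icc
    have h1 : IntegrableOn (fun _ : ℝ => (1:ℝ)) (Icc t T) MeasureTheory.volume :=
      integrableOn_const hIccfin.ne
    exact ((h1.add hf_int.norm.integrableOn).const_mul L)
  have hρIcc : ∀ r ∈ Icc t T, ρ r = L * (1 + ‖f r‖) := fun r hr => indicator_of_mem hr _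
  set Vf : ℝ → ℝ := fun u => ∫ r in t..(pj u), ρ r with hVfdef
  have hVc : Continuous Vf :=
    (intervalIntegral.continuous_primitive (fun a' b' => hρ_int.intervalIntegrable) t).comp hpjcont
  set gf : ℝ → ℝ := fun u => Ubar (pj u) (φt u) with hgfdef
  have hgc : Continuous gf := hUreg.1.comp (hpjcont.prodMk hφtc)
  -- the V-Lipschitz property
  have hLip : ∀ ⦃s u : ℝ⦄, s ≤ u → |gf u - gf s| ≤ Vf u - Vf s := by
    intro s u hsu
    have hpjs := hpjmem s
    have hpju := hpjmem u
    have hpjsu : pj s ≤ pj u := hpjmono hsu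
    have hVdiff : Vf u - Vf s = ∫ r in (pj s)..(pj u), ρ r := by
      rw [hVfdef]
      exact integral_interval_sub_left hρ_int.intervalIntegrable hρ_int.intervalIntegrable
    have hφdiff : φt u - φt s = ∫ r in (pj s)..(pj u), f r := by
      rw [hφtdef]
      simp only
      rw [add_sub_add_left_eq_sub, hprimdef]
      exact integral_interval_sub_left hf_int.intervalIntegrable hf_int.intervalIntegrable
    have htime : |Ubar (pj u) (φt u) - Ubar (pj s) (φt u)| ≤ L * (pj u - pj s) := by
      rcases eq_or_lt_of_le hpjsu with he | hlt
      · rw [he]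
        simp
      · obtain ⟨ξ, hξ, hval⟩ := exists_hasDerivAt_eq_slope (fun r => Ubar r (φt u))
          (fun r => deriv (fun r' => Ubar r' (φt u)) r) hlt
          ((hUreg.2.1 _).continuous.continuousOn)
          (fun r _ => ((hUreg.2.1 _) r).hasDerivAt)
        have heq : Ubar (pj u) (φt u) - Ubar (pj s) (φt u)
            = (pj u - pj s) * deriv (fun r' => Ubar r' (φt u)) ξ := by
          rw [hval]
          have hne : pj u - pj s ≠ 0 := by intro hh; linarith
          field_simp
        rw [heq, abs_mul]
        have hξmem : ξ ∈ Icc t T :=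
          ⟨le_trans hpjs.1 hξ.1.le, le_trans hξ.2.le hpju.2⟩
        have hb := hL1 ξ hξmem (φt u) (hφtK u)
        rw [abs_of_pos (by linarith : (0:ℝ) < pj u - pj s)]
        rw [mul_comm]
        exact mul_le_mul_of_nonneg_right hb (by linarith)
    have hspace : |Ubar (pj s) (φt u) - Ubar (pj s) (φt s)| ≤ L * ‖φt u - φt s‖ := by
      apply abs_sub_le_grad (hUreg.2.2.2.1 (pj s))
      intro θ hθ
      apply hL2 (pj s) hpjs
      exact hKco.add_smul_sub_mem (hφtK s) (hφtK u) hθ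
    have hφnorm : ‖φt u - φt s‖ ≤ ∫ r in (pj s)..(pj u), ‖f r‖ := by
      rw [hφdiff]
      exact intervalIntegral.norm_integral_le_integral_norm hpjsu
    have hfn_int : IntervalIntegrable (fun r => L * (1 + ‖f r‖)) MeasureTheory.volume
        (pj s) (pj u) := by
      apply IntervalIntegrable.const_mul
      exact intervalIntegrable_const.add hf_int.norm.intervalIntegrable
    have hbound : ∫ r in (pj s)..(pj u), (L * (1 + ‖f r‖)) ≤ Vf u - Vf s := by
      rw [hVdiff]
      apply intervalIntegral.integral_mono_on hpjsu hfn_int hρ_int.intervalIntegrable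
      intro r hr
      rw [hρIcc r (⟨le_trans hpjs.1 hr.1, le_trans hr.2 hpju.2⟩ : r ∈ Icc t T)]
    have hexpand : ∫ r in (pj s)..(pj u), (L * (1 + ‖f r‖))
        = L * (pj u - pj s) + L * ∫ r in (pj s)..(pj u), ‖f r‖ := by
      rw [intervalIntegral.integral_const_mul]
      rw [intervalIntegral.integral_add intervalIntegrable_const hf_int.norm.intervalIntegrable]
      rw [intervalIntegral.integral_const]
      simp only [smul_eq_mul, mul_one]
      ring
    have htri : |gf u - gf s| ≤ |Ubar (pj u) (φt u) - Ubar (pj s) (φt u)|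
        + |Ubar (pj s) (φt u) - Ubar (pj s) (φt s)| := by
      rw [hgfdef]
      exact abs_sub_le _ _ _
    calc |gf u - gf s| ≤ |Ubar (pj u) (φt u) - Ubar (pj s) (φt u)|
          + |Ubar (pj s) (φt u) - Ubar (pj s) (φt s)| := htri
      _ ≤ L * (pj u - pj s) + L * ‖φt u - φt s‖ := add_le_add htime hspace
      _ ≤ L * (pj u - pj s) + L * ∫ r in (pj s)..(pj u), ‖f r‖ := by
          have := mul_le_mul_of_nonneg_left hφnorm hL0
          linarith
      _ = ∫ r in (pj s)..(pj u), (L * (1 + ‖f r‖)) := hexpand.symm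
      _ ≤ Vf u - Vf s := hbound
  -- the a.e. derivative
  set Ff : ℝ → ℝ := fun s => deriv (fun r => Ubar r (φt s)) s
      + dotp (f s) (gradv (Ubar s) (φt s)) with hFfdef
  have hae : ∀ᵐ s : ℝ, s ∈ Ioo t T → HasDerivAt gf (Ff s) s ∧ HasDerivAt Vf (ρ s) s := by
    filter_upwards [ae_hasDerivAt_primitive t hf_int, ae_hasDerivAt_primitive t hρ_int]
      with s h1 h2 hmem
    have hnb : Ioo t T ∈ 𝓝 s := isOpen_Ioo.mem_nhds hmem
    have hpjev : ∀ᶠ u in 𝓝 s, pj u = u := by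
      filter_upwards [hnb] with u hu
      exact hpjid u (Ioo_subset_Icc_self hu)
    constructor
    · have hφtd : HasDerivAt φt (f s) s := by
        have hbase : HasDerivAt (fun u => x + prim u) (f s) s := by
          exact HasDerivAt.const_add x h1
        apply hbase.congr_of_eventuallyEq
        filter_upwards [hpjev] with u hu
        rw [hφtdef]
        simp only
        rw [hu]
      have hchain := hasDerivAt_comp_C1 hUreg hφtd
      have hev : gf =ᶠ[𝓝 s] fun u => Ubar u (φt u) := by
        filter_upwards [hpjev] with u hu
        rw [hgfdef]
        simp only
        rw [hu]
      exact (hchain.congr_of_eventuallyEq hev :)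
    · apply HasDerivAt.congr_of_eventuallyEq h2
      filter_upwards [hpjev] with u hu
      rw [hVfdef]
      simp only
      rw [hu]
  -- lower bound on Ff
  have hFR : ∀ s ∈ Ioo t T, -ρ s ≤ Ff s := by
    intro s hs
    have hsIcc : s ∈ Icc t T := Ioo_subset_Icc_self hs
    have hb1 := hL1 s hsIcc (φt s) (hφtK s)
    have hb2 : |dotp (f s) (gradv (Ubar s) (φt s))| ≤ L * ‖f s‖ := by
      refine (abs_dotp_le _ _).trans ?_
      exact mul_le_mul_of_nonneg_right (hL2 s hsIcc (φt s) (hφtK s)) (norm_nonneg _)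
    rw [hρIcc s hsIcc, hFfdef]
    have hh1 := (abs_le.1 hb1).1
    have hh2 := (abs_le.1 hb2).1
    simp only
    nlinarith [norm_nonneg (f s)]
  -- integrability of Ff
  have hDcont : Continuous fun s => deriv (fun r => Ubar r (φt s)) s :=
    hUreg.2.2.1.comp (continuous_id.prodMk hφtc)
  have hgradc : ∀ i, Continuous fun s => gradv (Ubar s) (φt s) i := by
    intro i
    have := (hUreg.2.2.2.2 i).comp (continuous_id.prodMk hφtc)
    simpa [gradv, Function.comp_def] using this
  have hfi_int : ∀ i, IntervalIntegrable (fun s => f s i) MeasureTheory.volume t T :=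
    fun i => intervalIntegrable_apply hf_int.intervalIntegrable i
  have hdot_int : IntervalIntegrable (fun s => dotp (f s) (gradv (Ubar s) (φt s)))
      MeasureTheory.volume t T := by
    have hrw : (fun s => dotp (f s) (gradv (Ubar s) (φt s)))
        = fun s => ∑ i, f s i * gradv (Ubar s) (φt s) i := rfl
    rw [hrw]
    apply intervalIntegrable_sum_fun
    intro i _
    exact (hfi_int i).mul_continuousOn (hgradc i).continuousOn
  have hFint : IntervalIntegrable Ff MeasureTheory.volume t T :=
    (hDcont.intervalIntegrable t T).add hdot_int
  have hVR : ∫ s in t..T, ρ s = Vf T - Vf t := by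
    rw [hVfdef]
    simp only
    rw [hpjid T ⟨htT, le_refl T⟩, hpjid t ⟨le_refl t, htT⟩,
      intervalIntegral.integral_same, sub_zero]
  -- the FTC inequality
  have hFTC : ∫ s in t..T, Ff s ≤ Ubar T (φ T) - Ubar t x := by
    have hmain := ftc_ineq htT' hgc hVc hLip hae hFR hFint hρ_int.intervalIntegrable hVR
    have hgT : gf T = Ubar T (φ T) := by
      rw [hgfdef]
      simp only
      rw [hpjid T ⟨htT, le_refl T⟩, hφtT]
    have hgt : gf t = Ubar t x := by
      rw [hgfdef]
      simp only
      rw [hpjid t ⟨le_refl t, htT⟩, hφtt]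
    rw [hgT, hgt] at hmain
    exact hmain
  -- continuity facts on [t,T] for integrability of Aint
  have hφcontOn : ContinuousOn φ (Icc t T) :=
    hφtc.continuousOn.congr fun s hs => (hφteq s hs).symm
  have hpOn : ∀ i, ContinuousOn (fun s => gradv (Ubar s) (φ s) i) (Icc t T) := by
    intro i
    have h1 := (hUreg.2.2.2.2 i).comp_continuousOn
      (continuousOn_id.prodMk hφcontOn)
    simpa [gradv, Function.comp_def] using h1
  have hσentry : ∀ k j, ContinuousOn (fun s => σ (φ s) k j) (Icc t T) := by
    intro k j
    exact (((continuous_apply j).comp (continuous_apply k)).comp hσC).comp_continuousOn hφcontOn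
  have hbentry : ∀ i, ContinuousOn (fun s => b (φ s) i) (Icc t T) := by
    intro i
    exact ((continuous_apply i).comp hbC).comp_continuousOn hφcontOn
  have hσpOn : ∀ j, ContinuousOn
      (fun s => ((σ (φ s))ᵀ *ᵥ gradv (Ubar s) (φ s)) j) (Icc t T) := by
    intro j
    have hrw : (fun s => ((σ (φ s))ᵀ *ᵥ gradv (Ubar s) (φ s)) j)
        = fun s => ∑ k, σ (φ s) k j * gradv (Ubar s) (φ s) k := by
      funext s
      simp [Matrix.mulVec, dotProduct, Matrix.transpose_apply]
    rw [hrw]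
    exact continuousOn_finset_sum _ fun k _ => (hσentry k j).mul (hpOn k)
  have hterm3On : ContinuousOn (fun s => (1/2) * dotp ((σ (φ s))ᵀ *ᵥ gradv (Ubar s) (φ s))
      ((σ (φ s))ᵀ *ᵥ gradv (Ubar s) (φ s))) (Icc t T) := by
    apply ContinuousOn.mul continuousOn_const
    have hrw : (fun s => dotp ((σ (φ s))ᵀ *ᵥ gradv (Ubar s) (φ s))
        ((σ (φ s))ᵀ *ᵥ gradv (Ubar s) (φ s)))
        = fun s => ∑ i, ((σ (φ s))ᵀ *ᵥ gradv (Ubar s) (φ s)) i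
            * ((σ (φ s))ᵀ *ᵥ gradv (Ubar s) (φ s)) i := rfl
    rw [hrw]
    exact continuousOn_finset_sum _ fun i _ => (hσpOn i).mul (hσpOn i)
  have hterm3_int : IntervalIntegrable (fun s => (1/2) * dotp ((σ (φ s))ᵀ *ᵥ gradv (Ubar s) (φ s))
      ((σ (φ s))ᵀ *ᵥ gradv (Ubar s) (φ s))) MeasureTheory.volume t T := by
    apply ContinuousOn.intervalIntegrable
    rw [uIcc_of_le htT]
    exact hterm3On
  have hterm2_int : IntervalIntegrable
      (fun s => dotp (φ' s - b (φ s)) (gradv (Ubar s) (φ s))) MeasureTheory.volume t T := by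
    have hrw : (fun s => dotp (φ' s - b (φ s)) (gradv (Ubar s) (φ s)))
        = fun s => (∑ i, φ' s i * gradv (Ubar s) (φ s) i)
            - ∑ i, b (φ s) i * gradv (Ubar s) (φ s) i := by
      funext s
      rw [dotp_sub_left]
      rfl
    rw [hrw]
    apply IntervalIntegrable.sub
    · apply intervalIntegrable_sum_fun
      intro i _
      exact (intervalIntegrable_apply hI1 i).mul_continuousOn (by
        rw [uIcc_of_le htT]; exact hpOn i)
    · apply ContinuousOn.intervalIntegrable
      rw [uIcc_of_le htT]
      exact continuousOn_finset_sum _ fun i _ => (hbentry i).mul (hpOn i)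
  have hAint_int : IntervalIntegrable Aint MeasureTheory.volume t T := by
    have hrw : Aint = fun s => Bint s
        + (dotp (φ' s - b (φ s)) (gradv (Ubar s) (φ s))
          + (1/2) * dotp ((σ (φ s))ᵀ *ᵥ gradv (Ubar s) (φ s))
              ((σ (φ s))ᵀ *ᵥ gradv (Ubar s) (φ s))) := by
      funext s
      rw [hBA s]
      ring
    rw [hrw]
    exact hBint.add (hterm2_int.add hterm3_int)
  -- the pointwise comparison
  have hpoint : ∀ s ∈ Icc t T, Aint s - Ff s ≤ Bint s := by
    intro s hs
    have h0 := hUsub s (φ s) (le_trans ht hs.1) hs.2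
    rw [hBA s, hFfdef]
    simp only
    rw [hφteq s hs, hf_eq s hs]
    rw [dotp_sub_left]
    set pp := gradv (Ubar s) (φ s)
    set qq := dotp ((σ (φ s))ᵀ *ᵥ pp) ((σ (φ s))ᵀ *ᵥ pp)
    have h0' : 0 ≤ deriv (fun r => Ubar r (φ s)) s + dotp (b (φ s)) pp - 1/2 * qq := h0
    linarith
  -- integral comparison
  have hABF : (∫ s in t..T, Aint s) - ∫ s in t..T, Ff s ≤ ∫ s in t..T, Bint s := by
    rw [← intervalIntegral.integral_sub hAint_int hFint]
    exact intervalIntegral.integral_mono_on htT (hAint_int.sub hFint) hBint hpoint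
  -- assemble everything
  have hAmem : (((∫ s in t..T, Aint s) + h (φ T) : ℝ) : EReal) ∈
      {r : EReal | ∃ φ φ' : ℝ → (Fin d → ℝ),
        φ t = x ∧
        (∀ s ∈ Set.Icc t T, φ s = x + ∫ u in t..s, φ' u) ∧
        IntervalIntegrable φ' MeasureTheory.volume t T ∧
        IntervalIntegrable (fun s => dotp (φ' s) (φ' s)) MeasureTheory.volume t T ∧
        IntervalIntegrable (fun s =>
          (1 / 2) * dotp (φ' s - b (φ s))
            ((σ (φ s) * (σ (φ s))ᵀ)⁻¹ *ᵥ (φ' s - b (φ s)))) MeasureTheory.volume t T ∧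
        r = (((∫ s in t..T,
            (1 / 2) * dotp (φ' s - b (φ s))
              ((σ (φ s) * (σ (φ s))ᵀ)⁻¹ *ᵥ (φ' s - b (φ s))))
          + h (φ T) : ℝ) : EReal)} :=
    ⟨φ, φ', hφt, hφeq, hI1, hI2, hAint_int, rfl⟩
  refine le_trans (add_le_add_left (sInf_le hAmem) _) ?_
  rw [hrEq, ← EReal.coe_add]
  rw [EReal.coe_le_coe_iff]
  have hUTb := hUT (φ T)
  linarith [hFTC, hABF]
end
end
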